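/- Let A be a C*-algebra with Cuntz semigroup Cu(A), and let I be a closed two-sided ideal of A corresponding to the ideal Cu(I) ⊆ Cu(A). If I is singly generated and is a compact element of the complete lattice of closed two-sided ideals of A (i.e., whenever I = sup of an increasing sequence of ideals I_n, then I = I_n for some n), then there exists a positive element e ∈ I that is full in I (generates I as a closed two-sided ideal) and whose Cuntz class [e] is compactly contained in some element of Cu(I), i.e., e belongs to the Pedersen ideal of I. Conversely, if such a full element e ∈ Ped(I)_+ exists, then I is a compact element of the ideal lattice. -/

import Mathlib

set_option maxHeartbeats 1000000

open scoped NNReal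

variable {A : Type*} [NonUnitalCStarAlgebra A]

/-- The closed two-sided ideal of `A` generated by a single element `a`:
the intersection of all closed two-sided ideals containing `a`. -/
def genClosedIdeal (a : A) : Set A :=
  ⋂₀ {S : Set A | IsClosed S ∧ (∃ J : TwoSidedIdeal A, (J : Set A) = S) ∧ a ∈ S}

/-- `I` is a compact element of the lattice of closed two-sided ideals of `A`:
whenever `I` is the supremum (closure of the union) of an increasing sequence of
closed two-sided ideals, it equals one of them. -/
def CompactIdealSeq (I : TwoSidedIdeal A) : Prop :=
  ∀ J : ℕ → TwoSidedIdeal A, (∀ n, IsClosed ((J n : Set A))) → Monotone J →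
    (I : Set A) = closure (⋃ n, (J n : Set A)) → ∃ n, (I : Set A) = (J n : Set A)

/-- Membership in the Pedersen ideal of the C*-algebra `I` (a closed two-sided ideal
of `A`, regarded as a set): `a` belongs to every dense (two-sided, not necessarily
closed) ideal of `I`. -/
def PedMem (I : Set A) (a : A) : Prop :=
  ∀ J : Set A, J ⊆ I → (0 : A) ∈ J → (∀ x ∈ J, ∀ y ∈ J, x + y ∈ J) →
    (∀ x ∈ J, -x ∈ J) → (∀ x ∈ I, ∀ j ∈ J, x * j ∈ J ∧ j * x ∈ J) →
    I ⊆ closure J → a ∈ J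

namespace CSGAux

lemma genClosedIdeal_subset {a : A} {S : Set A} (hS : IsClosed S)
    (hJ : ∃ J : TwoSidedIdeal A, (J : Set A) = S) (ha : a ∈ S) :
    genClosedIdeal a ⊆ S :=
  Set.sInter_subset_of_mem ⟨hS, hJ, ha⟩

lemma isClosed_genClosedIdeal (a : A) : IsClosed (genClosedIdeal a) :=
  isClosed_sInter fun _ hS => hS.1

lemma self_mem_genClosedIdeal (a : A) : a ∈ genClosedIdeal a :=
  Set.mem_sInter.mpr fun _ hS => hS.2.2

/-- `genClosedIdeal a` as a `TwoSidedIdeal`. -/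
def genIdeal (a : A) : TwoSidedIdeal A :=
  .mk' (genClosedIdeal a)
    (Set.mem_sInter.mpr fun S hS => by obtain ⟨-, ⟨J, rfl⟩, -⟩ := hS; exact J.zero_mem)
    (fun {x y} hx hy => Set.mem_sInter.mpr fun S hS => by
      obtain ⟨h1, ⟨J, rfl⟩, h3⟩ := hS
      exact J.add_mem (Set.mem_sInter.mp hx _ ⟨h1, ⟨J, rfl⟩, h3⟩)
        (Set.mem_sInter.mp hy _ ⟨h1, ⟨J, rfl⟩, h3⟩))
    (fun {x} hx => Set.mem_sInter.mpr fun S hS => by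
      obtain ⟨h1, ⟨J, rfl⟩, h3⟩ := hS
      exact J.neg_mem (Set.mem_sInter.mp hx _ ⟨h1, ⟨J, rfl⟩, h3⟩))
    (fun {x y} hy => Set.mem_sInter.mpr fun S hS => by
      obtain ⟨h1, ⟨J, rfl⟩, h3⟩ := hS
      exact J.mul_mem_left _ _ (Set.mem_sInter.mp hy _ ⟨h1, ⟨J, rfl⟩, h3⟩))
    (fun {x y} hx => Set.mem_sInter.mpr fun S hS => by
      obtain ⟨h1, ⟨J, rfl⟩, h3⟩ := hS
      exact J.mul_mem_right _ _ (Set.mem_sInter.mp hx _ ⟨h1, ⟨J, rfl⟩, h3⟩))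

lemma coe_genIdeal (a : A) : (genIdeal a : Set A) = genClosedIdeal a :=
  TwoSidedIdeal.coe_mk' _ _ _ _ _ _

lemma genClosedIdeal_mono {a b : A} (h : a ∈ genClosedIdeal b) :
    genClosedIdeal a ⊆ genClosedIdeal b :=
  genClosedIdeal_subset (isClosed_genClosedIdeal b) ⟨genIdeal b, coe_genIdeal b⟩ h

lemma mul_mem_left_genClosedIdeal (a x : A) {y : A} (hy : y ∈ genClosedIdeal a) :
    x * y ∈ genClosedIdeal a := by
  rw [← coe_genIdeal, SetLike.mem_coe] at hy ⊢
  exact (genIdeal a).mul_mem_left _ _ hy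

lemma mul_mem_right_genClosedIdeal (a y : A) {x : A} (hx : x ∈ genClosedIdeal a) :
    x * y ∈ genClosedIdeal a := by
  rw [← coe_genIdeal, SetLike.mem_coe] at hx ⊢
  exact (genIdeal a).mul_mem_right _ _ hx

/-- Closure of a set satisfying ideal axioms is the carrier of a two-sided ideal. -/
lemma exists_ideal_closure {U : Set A} (h0 : (0:A) ∈ U)
    (hadd : ∀ x ∈ U, ∀ y ∈ U, x + y ∈ U)
    (hneg : ∀ x ∈ U, -x ∈ U)
    (hml : ∀ (x : A), ∀ y ∈ U, x * y ∈ U)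
    (hmr : ∀ x ∈ U, ∀ (y : A), x * y ∈ U) :
    ∃ J : TwoSidedIdeal A, (J : Set A) = closure U := by
  let G : AddSubgroup A :=
    { carrier := U
      zero_mem' := h0
      add_mem' := fun hx hy => hadd _ hx _ hy
      neg_mem' := fun hx => hneg _ hx }
  have hcoe : (G.topologicalClosure : Set A) = closure U := AddSubgroup.topologicalClosure_coe
  have hGc : ∀ x y : A, x ∈ closure U → y ∈ closure U → x + y ∈ closure U := by
    intro x y hx hy
    rw [← hcoe] at hx hy ⊢
    exact G.topologicalClosure.add_mem hx hy
  have hGn : ∀ x : A, x ∈ closure U → -x ∈ closure U := by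
    intro x hx
    rw [← hcoe] at hx ⊢
    exact G.topologicalClosure.neg_mem hx
  refine ⟨.mk' (closure U) (subset_closure h0) (fun {x y} hx hy => hGc x y hx hy)
    (fun {x} hx => hGn x hx) ?_ ?_, TwoSidedIdeal.coe_mk' _ _ _ _ _ _⟩
  · intro x y hy
    have h1 : x * y ∈ (fun z => x * z) '' closure U := ⟨y, hy, rfl⟩
    have h2 := image_closure_subset_closure_image (continuous_mul_left x) h1
    refine closure_mono ?_ h2
    rintro _ ⟨u, hu, rfl⟩
    exact hml x u hu
  · intro x y hx
    have h1 : x * y ∈ (fun z => z * y) '' closure U := ⟨x, hx, rfl⟩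
    have h2 := image_closure_subset_closure_image (continuous_mul_right y) h1
    refine closure_mono ?_ h2
    rintro _ ⟨u, hu, rfl⟩
    exact hmr u hu y

/-- Quasi-inverse via Neumann series, inside a closed ideal. -/
lemma exists_quasi_inverse (I : TwoSidedIdeal A) (hIc : IsClosed (I : Set A)) {r : A}
    (hrI : r ∈ I) (hr : ‖r‖ < 1) : ∃ s : A, s ∈ I ∧ s + r + s * r = 0 := by
  let p : ℕ → A := fun n => Nat.rec (-r) (fun _ q => q * (-r)) n
  have hp0 : p 0 = -r := rfl
  have hps : ∀ n, p (n + 1) = p n * (-r) := fun n => rfl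
  have hpnorm : ∀ n, ‖p n‖ ≤ ‖r‖ ^ (n + 1) := by
    intro n
    induction n with
    | zero => simp [hp0]
    | succ n ih =>
        rw [hps]
        calc ‖p n * (-r)‖ ≤ ‖p n‖ * ‖r‖ := by simpa using norm_mul_le (p n) (-r)
          _ ≤ ‖r‖ ^ (n + 1) * ‖r‖ := mul_le_mul_of_nonneg_right ih (norm_nonneg r)
          _ = ‖r‖ ^ (n + 1 + 1) := by ring
  have hsum : Summable p := by
    refine Summable.of_norm_bounded
      (Summable.mul_left ‖r‖ (summable_geometric_of_lt_one (norm_nonneg r) hr)) fun n => ?_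
    calc ‖p n‖ ≤ ‖r‖ ^ (n + 1) := hpnorm n
      _ = ‖r‖ * ‖r‖ ^ n := by ring
  set s := ∑' n, p n with hsdef
  have hpI : ∀ n, p n ∈ I := by
    intro n
    induction n with
    | zero => exact I.neg_mem hrI
    | succ n ih => exact I.mul_mem_right _ _ ih
  have hsI : s ∈ I := by
    have ht := hsum.hasSum.tendsto_sum_nat
    have : s ∈ (I : Set A) := hIc.mem_of_tendsto ht
      (Filter.Eventually.of_forall fun n => by
        exact sum_mem fun i _ => hpI i)
    exact this
  refine ⟨s, hsI, ?_⟩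
  have hshift : s = -r + s * (-r) := by
    have h1 : s = p 0 + ∑' n, p (n + 1) := hsum.tsum_eq_zero_add
    have h2 : ∑' n, p (n + 1) = ∑' n, p n * (-r) := by
      simp only [hps]
    have h3 : ∑' n, p n * (-r) = s * (-r) := hsum.tsum_mul_right (-r)
    conv_lhs => rw [h1]
    rw [h2, h3, hp0]
  calc s + r + s * r = (-r + s * -r) + r + s * r := by rw [← hshift]
    _ = 0 := by noncomm_ring

section CFCAux
variable [PartialOrder A] [StarOrderedRing A]

lemma q_cont (K : ℝ) (hK : 0 < K) : Continuous fun t : ℝ => K * t / (1 + K * t ^ 2) := by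
  apply Continuous.div (by fun_prop) (by fun_prop)
  intro t
  positivity

lemma h_cont (K : ℝ) (hK : 0 < K) : Continuous fun t : ℝ => K * t ^ 2 / (1 + K * t ^ 2) := by
  apply Continuous.div (by fun_prop) (by fun_prop)
  intro t
  positivity

/-- Key approximation estimate: `cfcₙ f b` is approximated by `b * (cfc element)`. -/
lemma approx_est {b : A} (hb : 0 ≤ b) {f : ℝ → ℝ}
    (hf : ContinuousOn f (quasispectrum ℝ b)) (hf0 : f 0 = 0) {ε : ℝ} (hε : 0 < ε) :
    ∃ K : ℝ, 0 < K ∧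
      ‖cfcₙ f b - b * cfcₙ (fun t => K * t / (1 + K * t ^ 2) * f t) b‖ < ε := by
  have hsa : IsSelfAdjoint b := .of_nonneg hb
  obtain ⟨C, hC⟩ := (NonUnitalContinuousFunctionalCalculus.isCompact_quasispectrum
    (R := ℝ) b).exists_bound_of_continuousOn hf
  have hC0 : 0 ≤ C := le_trans (norm_nonneg _) (hC 0 (quasispectrum.zero_mem ℝ b))
  obtain ⟨δ, hδ, hδf⟩ := Metric.continuousWithinAt_iff.mp
    (hf 0 (quasispectrum.zero_mem ℝ b)) (ε / 2) (by positivity)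
  obtain ⟨k, hk⟩ := exists_nat_gt (C / (δ ^ 2 * (ε / 2)))
  set K : ℝ := (k : ℝ) + 1 with hKdef
  have hK : 0 < K := by positivity
  refine ⟨K, hK, ?_⟩
  have hq := q_cont K hK
  have key : cfcₙ f b - b * cfcₙ (fun t => K * t / (1 + K * t ^ 2) * f t) b
      = cfcₙ (fun t => f t - t * (K * t / (1 + K * t ^ 2) * f t)) b := by
    rw [cfcₙ_sub _ _ b hf hf0
      (show ContinuousOn (fun t : ℝ => t * (K * t / (1 + K * t ^ 2) * f t))
          (quasispectrum ℝ b) from ContinuousOn.mul continuousOn_id ((hq.continuousOn).mul hf))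
      (by simp),
      cfcₙ_mul (fun t : ℝ => t) (fun t => K * t / (1 + K * t ^ 2) * f t) b (by fun_prop) rfl ((hq.continuousOn).mul hf)
        (by simp [hf0]),
      cfcₙ_id' ℝ b]
  rw [key]
  refine lt_of_le_of_lt (norm_cfcₙ_le fun t ht => ?_) (by linarith : ε / 2 < ε)
  have ht0 : 0 ≤ t := quasispectrum_nonneg_of_nonneg b hb t ht
  have hd : 0 < 1 + K * t ^ 2 := by positivity
  have heq : f t - t * (K * t / (1 + K * t ^ 2) * f t) = f t / (1 + K * t ^ 2) := by
    field_simp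
    ring
  rw [heq, norm_div, Real.norm_eq_abs (1 + K * t ^ 2), abs_of_pos hd]
  rcases lt_or_ge t δ with hlt | hge
  · have := hδf ht (by simpa [Real.dist_eq, abs_of_nonneg ht0] using hlt)
    rw [Real.dist_eq, hf0, sub_zero] at this
    have h1 : (1:ℝ) ≤ 1 + K * t ^ 2 := by nlinarith
    calc ‖f t‖ / (1 + K * t ^ 2) ≤ ‖f t‖ / 1 := by
          apply div_le_div_of_nonneg_left (norm_nonneg _) one_pos h1 |>.trans le_rfl
      _ ≤ ε / 2 := by rw [div_one]; exact le_of_lt (by simpa [Real.norm_eq_abs] using this)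
  · have h1 : K * δ ^ 2 ≤ 1 + K * t ^ 2 := by
      nlinarith [mul_le_mul_of_nonneg_left (pow_le_pow_left₀ hδ.le hge 2) hK.le]
    have h2 : ‖f t‖ / (1 + K * t ^ 2) ≤ C / (K * δ ^ 2) := by
      apply div_le_div₀ hC0 (hC t ht) (by positivity) h1
    refine h2.trans ?_
    rw [div_le_iff₀ (by positivity)]
    have : C < K * (δ ^ 2 * (ε / 2)) := by
      have hpos : 0 < δ ^ 2 * (ε / 2) := by positivity
      have := (div_lt_iff₀ hpos).mp (hk.trans_le (by simp [hKdef] : (k:ℝ) ≤ K))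
      nlinarith
    nlinarith

/-- Any continuous-functional-calculus image of `b` lies in the closed ideal generated
by `b`. -/
lemma cfcₙ_mem_genClosedIdeal {b : A} (hb : 0 ≤ b) {f : ℝ → ℝ}
    (hf : ContinuousOn f (quasispectrum ℝ b)) (hf0 : f 0 = 0) :
    cfcₙ f b ∈ genClosedIdeal b := by
  rw [← (isClosed_genClosedIdeal b).closure_eq, Metric.mem_closure_iff]
  intro ε hε
  obtain ⟨K, hK, hest⟩ := approx_est hb hf hf0 hε
  exact ⟨b * cfcₙ (fun t => K * t / (1 + K * t ^ 2) * f t) b,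
    mul_mem_right_genClosedIdeal b _ (self_mem_genClosedIdeal b), by rwa [dist_eq_norm]⟩

/-- `a` is approximated by `a * u` with `u` a cfc image of `star a * a`. -/
lemma norm_sub_self_mul_lt (a : A) {ε : ℝ} (hε : 0 < ε) :
    ∃ u : A, (∃ g : ℝ → ℝ, ContinuousOn g (quasispectrum ℝ (star a * a)) ∧ g 0 = 0 ∧
      u = cfcₙ g (star a * a)) ∧ ‖a - a * u‖ < ε := by
  set b := star a * a with hbdef
  have hb : 0 ≤ b := star_mul_self_nonneg a
  have hsa : IsSelfAdjoint b := .of_nonneg hb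
  obtain ⟨m, hm⟩ := exists_nat_gt (1 / (2 * ε ^ 2))
  set M : ℝ := (m : ℝ) + 1 with hMdef
  have hM : 0 < M := by positivity
  set K : ℝ := M ^ 2 with hKdef
  have hK : 0 < K := by positivity
  set h : ℝ → ℝ := fun t => K * t ^ 2 / (1 + K * t ^ 2) with hhdef
  have hhc : Continuous h := h_cont K hK
  have hh0 : h 0 = 0 := by simp [hhdef]
  set u : A := cfcₙ h b with hudef
  have hu : IsSelfAdjoint u := cfcₙ_predicate h b
  refine ⟨u, ⟨h, hhc.continuousOn, hh0, rfl⟩, ?_⟩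
  have hz : ‖a - a * u‖ * ‖a - a * u‖ = ‖star (a - a * u) * (a - a * u)‖ :=
    (CStarRing.norm_star_mul_self).symm
  set w : A := b - b * u with hwdef
  have hprod : star (a - a * u) * (a - a * u) = w - u * w := by
    rw [hwdef, hbdef]
    simp only [star_sub, star_mul, hu.star_eq]
    noncomm_ring
  have hwf : w = cfcₙ (fun t => t - t * h t) b := by
    rw [cfcₙ_sub _ _ b (by fun_prop) (by simp)
      (show ContinuousOn (fun t : ℝ => t * h t) (quasispectrum ℝ b) from
        ContinuousOn.mul continuousOn_id hhc.continuousOn) (by simp [hh0]),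
      cfcₙ_mul (fun t : ℝ => t) h b (by fun_prop) rfl hhc.continuousOn hh0,
      cfcₙ_id' ℝ b, hwdef, hudef]
  have hwuf : w - u * w = cfcₙ (fun t => (t - t * h t) - h t * (t - t * h t)) b := by
    have hwc : ContinuousOn (fun t : ℝ => t - t * h t) (quasispectrum ℝ b) :=
      ContinuousOn.sub continuousOn_id (ContinuousOn.mul continuousOn_id hhc.continuousOn)
    rw [cfcₙ_sub (fun t => t - t * h t) (fun t => h t * (t - t * h t)) b hwc (by simp [hh0])
      (hhc.continuousOn.mul hwc) (by simp [hh0]),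
      cfcₙ_mul h (fun t => t - t * h t) b hhc.continuousOn hh0 hwc (by simp [hh0]), ← hwf]
  have hbound : ‖w - u * w‖ ≤ 1 / (2 * M) := by
    rw [hwuf]
    refine norm_cfcₙ_le fun t ht => ?_
    have ht0 : 0 ≤ t := quasispectrum_nonneg_of_nonneg b hb t ht
    have hd : 0 < 1 + K * t ^ 2 := by positivity
    have heq : (t - t * h t) - h t * (t - t * h t) = t / (1 + K * t ^ 2) ^ 2 := by
      rw [hhdef]
      field_simp
      ring
    rw [heq, Real.norm_eq_abs, abs_of_nonneg (by positivity)]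
    rw [div_le_div_iff₀ (by positivity) (by positivity)]
    have key : 2 * M * t ≤ 1 + K * t ^ 2 := by nlinarith [sq_nonneg (1 - M * t)]
    have h1 : (1:ℝ) ≤ 1 + K * t ^ 2 := by nlinarith
    have h2 : (1 + K * t ^ 2) ≤ (1 + K * t ^ 2) ^ 2 := by nlinarith
    linarith
  have hfin : ‖a - a * u‖ * ‖a - a * u‖ < ε * ε := by
    rw [hz, hprod]
    refine lt_of_le_of_lt hbound ?_
    rw [div_lt_iff₀ (by positivity)]
    have : 1 / (2 * ε ^ 2) < M := by rw [hMdef]; linarith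
    rw [div_lt_iff₀ (by positivity)] at this
    nlinarith
  nlinarith [norm_nonneg (a - a * u), hε]

/-- Pointwise factorization `(t - α)₊ = g(t) · (t - β)₊`. -/
lemma max_factor {α β : ℝ} (hβα : β < α) (t : ℝ) :
    max (t - α) 0 = (max (t - α) 0 / (max (t - α) 0 + (α - β))) * max (t - β) 0 := by
  rcases le_total t α with h | h
  · rw [max_eq_right (by linarith : t - α ≤ 0)]
    simp
  · rw [max_eq_left (by linarith : (0:ℝ) ≤ t - α), max_eq_left (by linarith : (0:ℝ) ≤ t - β)]
    have hne : t - β ≠ 0 := by linarith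
    rw [show t - α + (α - β) = t - β by ring, div_mul_cancel₀ _ hne]

lemma gfun_cont {α β : ℝ} (hβα : β < α) :
    Continuous fun t : ℝ => max (t - α) 0 / (max (t - α) 0 + (α - β)) := by
  apply Continuous.div (by fun_prop) (by fun_prop)
  intro t
  have h1 : (0:ℝ) ≤ max (t - α) 0 := le_max_right _ _
  have h2 : (0:ℝ) < α - β := by linarith
  exact ne_of_gt (by linarith)

/-- The cut-down `(b - α)₊` lies in the ideal generated by `(b - β)₊` for `β < α`. -/
lemma cfcₙ_max_mem_max {b : A} (hb : 0 ≤ b) {α β : ℝ} (hβ : 0 ≤ β) (hβα : β < α) :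
    cfcₙ (fun t => max (t - α) 0) b
      ∈ genClosedIdeal (cfcₙ (fun t => max (t - β) 0) b) := by
  have hα : 0 < α := lt_of_le_of_lt hβ hβα
  rw [show (fun t : ℝ => max (t - α) 0)
      = fun t => (max (t - α) 0 / (max (t - α) 0 + (α - β))) * max (t - β) 0 from
    funext (max_factor hβα)]
  rw [cfcₙ_mul _ _ b (gfun_cont hβα).continuousOn
    (by rw [max_eq_right (by linarith : (0:ℝ) - α ≤ 0), zero_div])
    (by fun_prop) (by rw [max_eq_right (by linarith : (0:ℝ) - β ≤ 0)])]
  exact mul_mem_left_genClosedIdeal _ _ (self_mem_genClosedIdeal _)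

lemma cfcₙ_max_mem_self {b : A} (hb : 0 ≤ b) {α : ℝ} (hα : 0 < α) :
    cfcₙ (fun t => max (t - α) 0) b ∈ genClosedIdeal b :=
  cfcₙ_mem_genClosedIdeal hb (by fun_prop)
    (by rw [max_eq_right (by linarith : (0:ℝ) - α ≤ 0)])

lemma min_one_mul {α : ℝ} (hα : 0 < α) (t : ℝ) :
    min (2 / α * t) 1 * max (t - α) 0 = max (t - α) 0 := by
  rcases le_total t α with h | h
  · rw [max_eq_right (by linarith : t - α ≤ 0), mul_zero]
  · have h2 : (1:ℝ) ≤ 2 / α * t := by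
      rw [div_mul_eq_mul_div, le_div_iff₀ hα]
      nlinarith
    rw [min_eq_right h2, one_mul]

lemma max_lip {α : ℝ} (hα : 0 ≤ α) (t : ℝ) :
    |max t 0 - max (t - α) 0| ≤ α := by
  have h1 : max (t - α) 0 ≤ max t 0 := max_le_max (by linarith) le_rfl
  have h2 : max t 0 ≤ max (t - α) 0 + α := by
    apply max_le
    · have := le_max_left (t - α) (0:ℝ)
      linarith
    · have := le_max_right (t - α) (0:ℝ)
      linarith
  rw [abs_le]
  constructor <;> linarith

/-- The central lemma: `(b - α)₊` belongs to every dense ideal of `I`. -/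
lemma pedMem_cfcₙ_max {I : TwoSidedIdeal A} (hIc : IsClosed (I : Set A)) {b : A}
    (hb : 0 ≤ b) (hbI : b ∈ (I : Set A)) {α : ℝ} (hα : 0 < α) :
    PedMem (I : Set A) (cfcₙ (fun t => max (t - α) 0) b) := by
  intro J hJI h0 hadd hneg hmul hdense
  have hsa : IsSelfAdjoint b := .of_nonneg hb
  set f : ℝ → ℝ := fun t => max (t - α) 0 with hfdef
  have hfc : Continuous f := by fun_prop
  have hf0 : f 0 = 0 := by
    simp only [hfdef]
    exact max_eq_right (by linarith)
  set e := cfcₙ f b with hedef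
  set h : ℝ → ℝ := fun t => min (2 / α * t) 1 with hhdef
  have hhc : Continuous h := by fun_prop
  have hh0 : h 0 = 0 := by simp [hhdef]
  set v := cfcₙ h b with hvdef
  have hIgen : genClosedIdeal b ⊆ (I : Set A) :=
    genClosedIdeal_subset hIc ⟨I, rfl⟩ hbI
  have hvI : v ∈ (I : Set A) :=
    hIgen (cfcₙ_mem_genClosedIdeal hb hhc.continuousOn hh0)
  have heI : e ∈ (I : Set A) :=
    hIgen (cfcₙ_mem_genClosedIdeal hb hfc.continuousOn hf0)
  have hve : v * e = e := by
    rw [hvdef, hedef, ← cfcₙ_mul h f b hhc.continuousOn hh0 hfc.continuousOn hf0]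
    exact cfcₙ_congr fun t _ => min_one_mul hα t
  obtain ⟨c, hcJ, hcv⟩ := Metric.mem_closure_iff.mp (hdense hvI) (1/2) (by norm_num)
  set r := c - v with hrdef
  have hrI : r ∈ I := I.sub_mem (SetLike.mem_coe.mp (hJI hcJ)) (SetLike.mem_coe.mp hvI)
  have hrn : ‖r‖ < 1 := by
    rw [hrdef]
    calc ‖c - v‖ = dist v c := by rw [dist_eq_norm, norm_sub_rev]
      _ < 1/2 := hcv
      _ < 1 := by norm_num
  obtain ⟨s, hsI, hq⟩ := exists_quasi_inverse I hIc hrI hrn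
  have hy : c * e ∈ J := (hmul e heI c hcJ).2
  have hsy : s * (c * e) ∈ J := (hmul s (SetLike.mem_coe.mpr hsI) _ hy).1
  have hfinal : c * e + s * (c * e) = e := by
    have hc : c = v + r := by rw [hrdef]; abel
    rw [hc, add_mul, hve]
    calc (e + r * e) + s * (e + r * e) = e + (s + r + s * r) * e := by noncomm_ring
      _ = e := by rw [hq, zero_mul, add_zero]
  have := hadd _ hy _ hsy
  rwa [hfinal] at this

end CFCAux

end CSGAux

open CSGAux in
theorem compact_singly_generated_iff_full_pedersen_element
    [PartialOrder A] [StarOrderedRing A]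
    (I : TwoSidedIdeal A) (hIc : IsClosed (I : Set A)) :
    ((∃ a : A, genClosedIdeal a = (I : Set A)) ∧ CompactIdealSeq I →
      ∃ e : A, 0 ≤ e ∧ e ∈ I ∧ genClosedIdeal e = (I : Set A) ∧
        PedMem (I : Set A) e) ∧
    ((∃ e : A, 0 ≤ e ∧ e ∈ I ∧ genClosedIdeal e = (I : Set A) ∧
        PedMem (I : Set A) e) → CompactIdealSeq I) := by
  constructor
  · rintro ⟨⟨a, ha⟩, hcomp⟩
    set b := star a * a with hbdef
    have hb : 0 ≤ b := star_mul_self_nonneg a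
    have hsa : IsSelfAdjoint b := .of_nonneg hb
    have hba : b ∈ genClosedIdeal a :=
      mul_mem_left_genClosedIdeal a (star a) (self_mem_genClosedIdeal a)
    have hab : a ∈ genClosedIdeal b := by
      rw [← (isClosed_genClosedIdeal b).closure_eq, Metric.mem_closure_iff]
      intro ε hε
      obtain ⟨u, ⟨g, hgc, hg0, hgu⟩, hnorm⟩ := norm_sub_self_mul_lt a hε
      refine ⟨a * u, ?_, by rwa [dist_eq_norm]⟩
      exact mul_mem_left_genClosedIdeal b a (hgu ▸ cfcₙ_mem_genClosedIdeal hb hgc hg0)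
    have hgen : genClosedIdeal b = (I : Set A) := by
      rw [← ha]
      exact Set.Subset.antisymm (genClosedIdeal_mono hba) (genClosedIdeal_mono hab)
    have hbI : b ∈ (I : Set A) := hgen ▸ self_mem_genClosedIdeal b
    set en : ℕ → A := fun n => cfcₙ (fun t => max (t - 1 / ((n : ℝ) + 1)) 0) b with hendef
    have hpos : ∀ n : ℕ, (0:ℝ) < 1 / ((n : ℝ) + 1) := fun n => by positivity
    set Jseq : ℕ → TwoSidedIdeal A := fun n => genIdeal (en n) with hJdef
    have hJcoe : ∀ n, (Jseq n : Set A) = genClosedIdeal (en n) := fun n => coe_genIdeal _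
    have hJcl : ∀ n, IsClosed (Jseq n : Set A) := fun n => by
      rw [hJcoe]; exact isClosed_genClosedIdeal _
    have hJmono : Monotone Jseq := by
      apply monotone_nat_of_le_succ
      intro n
      rw [TwoSidedIdeal.le_iff, hJcoe, hJcoe]
      have hcast : en (n+1) = cfcₙ (fun t => max (t - 1 / ((n:ℝ) + 1 + 1)) 0) b := by
        rw [hendef]
        norm_num
      rw [hcast, hendef]
      apply genClosedIdeal_mono
      exact cfcₙ_max_mem_max hb (by positivity)
        (show 1 / ((n:ℝ) + 1 + 1) < 1 / ((n:ℝ) + 1) by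
          apply one_div_lt_one_div_of_lt <;> [positivity; linarith])
    have henI : ∀ n, en n ∈ (I : Set A) := fun n =>
      hgen ▸ cfcₙ_max_mem_self hb (hpos n)
    have hJsub : ∀ n, (Jseq n : Set A) ⊆ (I : Set A) := fun n => by
      rw [hJcoe]
      exact genClosedIdeal_subset hIc ⟨I, rfl⟩ (henI n)
    have hIeq : (I : Set A) = closure (⋃ n, (Jseq n : Set A)) := by
      apply Set.Subset.antisymm
      · rw [← hgen]
        refine genClosedIdeal_subset isClosed_closure ?_ ?_
        · apply exists_ideal_closure
          · exact Set.mem_iUnion.mpr ⟨0, (Jseq 0).zero_mem⟩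
          · intro x hx y hy
            obtain ⟨m, hm⟩ := Set.mem_iUnion.mp hx
            obtain ⟨k, hk⟩ := Set.mem_iUnion.mp hy
            refine Set.mem_iUnion.mpr ⟨max m k, ?_⟩
            exact (Jseq (max m k)).add_mem
              (TwoSidedIdeal.le_iff.mp (hJmono (le_max_left m k)) hm)
              (TwoSidedIdeal.le_iff.mp (hJmono (le_max_right m k)) hk)
          · intro x hx
            obtain ⟨m, hm⟩ := Set.mem_iUnion.mp hx
            exact Set.mem_iUnion.mpr ⟨m, (Jseq m).neg_mem hm⟩
          · intro x y hy
            obtain ⟨m, hm⟩ := Set.mem_iUnion.mp hy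
            exact Set.mem_iUnion.mpr ⟨m, (Jseq m).mul_mem_left _ _ hm⟩
          · intro x hx y
            obtain ⟨m, hm⟩ := Set.mem_iUnion.mp hx
            exact Set.mem_iUnion.mpr ⟨m, (Jseq m).mul_mem_right _ _ hm⟩
        · rw [Metric.mem_closure_iff]
          intro ε hε
          obtain ⟨n, hn⟩ := exists_nat_gt (1 / ε)
          refine ⟨en n, Set.mem_iUnion.mpr ⟨n, by
            rw [hJcoe]; exact self_mem_genClosedIdeal _⟩, ?_⟩
          have hbmax : b = cfcₙ (fun t : ℝ => max t 0) b := by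
            conv_lhs => rw [← cfcₙ_id ℝ b]
            exact cfcₙ_congr fun t ht =>
              (max_eq_left (quasispectrum_nonneg_of_nonneg b hb t ht)).symm
          have hdiff : dist b (en n) ≤ 1 / ((n:ℝ) + 1) := by
            have hsplit : b - en n
                = cfcₙ (fun t => max t 0 - max (t - 1 / ((n:ℝ) + 1)) 0) b := by
              rw [cfcₙ_sub _ _ b (by fun_prop) (by simp) (by fun_prop)
                (by rw [max_eq_right (by
                  have := le_of_lt (hpos n); linarith : (0:ℝ) - 1/((n:ℝ)+1) ≤ 0)]),
                ← hbmax, hendef]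
            rw [dist_eq_norm, hsplit]
            exact norm_cfcₙ_le fun t ht => by
              rw [Real.norm_eq_abs]
              exact max_lip (le_of_lt (hpos n)) t
          refine lt_of_le_of_lt hdiff ?_
          rw [div_lt_iff₀ (by positivity)]
          rw [div_lt_iff₀ hε] at hn
          nlinarith
      · exact closure_minimal (Set.iUnion_subset hJsub) hIc
    obtain ⟨n, hn⟩ := hcomp Jseq hJcl hJmono hIeq
    refine ⟨en n, ?_, ?_, ?_, ?_⟩
    · exact cfcₙ_nonneg fun t _ => le_max_right _ _
    · exact SetLike.mem_coe.mp (henI n)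
    · rw [hn, hJcoe]
    · exact pedMem_cfcₙ_max hIc hb hbI (hpos n)
  · rintro ⟨e, he0, heI, hegen, hped⟩ J hJcl hJmono hIeq
    have hsub : ∀ n, (J n : Set A) ⊆ (I : Set A) := fun n => by
      rw [hIeq]
      exact (Set.subset_iUnion (fun k => (J k : Set A)) n).trans subset_closure
    have heU : e ∈ ⋃ n, (J n : Set A) := by
      apply hped
      · exact Set.iUnion_subset hsub
      · exact Set.mem_iUnion.mpr ⟨0, (J 0).zero_mem⟩
      · intro x hx y hy
        obtain ⟨m, hm⟩ := Set.mem_iUnion.mp hx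
        obtain ⟨k, hk⟩ := Set.mem_iUnion.mp hy
        exact Set.mem_iUnion.mpr ⟨max m k, (J (max m k)).add_mem
          (TwoSidedIdeal.le_iff.mp (hJmono (le_max_left m k)) hm)
          (TwoSidedIdeal.le_iff.mp (hJmono (le_max_right m k)) hk)⟩
      · intro x hx
        obtain ⟨m, hm⟩ := Set.mem_iUnion.mp hx
        exact Set.mem_iUnion.mpr ⟨m, (J m).neg_mem hm⟩
      · intro x _ j hj
        obtain ⟨m, hm⟩ := Set.mem_iUnion.mp hj
        exact ⟨Set.mem_iUnion.mpr ⟨m, (J m).mul_mem_left _ _ hm⟩,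
          Set.mem_iUnion.mpr ⟨m, (J m).mul_mem_right _ _ hm⟩⟩
      · rw [hIeq]
    obtain ⟨n, hen⟩ := Set.mem_iUnion.mp heU
    refine ⟨n, Set.Subset.antisymm ?_ (hsub n)⟩
    rw [← hegen]
    exact genClosedIdeal_subset (hJcl n) ⟨J n, rfl⟩ hen
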